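/- Let E be a real inner product space and K ⊆ E a convex set of diameter at most D > 0. Let T ≥ 1, λ, G > 0, and let ℓ₁, …, ℓ_T : E → ℝ be differentiable functions that are λ-strongly convex on K in the paper's convention (ℓ_t(μ) − ℓ_t(μ₀) ≤ ⟨∇ℓ_t(μ), μ − μ₀⟩ − λ‖μ − μ₀‖² for μ, μ₀ ∈ K) with ‖∇ℓ_t(x)‖ ≤ G for all x ∈ K. For each t let μ*_t ∈ K be a minimiser of ℓ_t over K. Set η_t := D/(G√t). Suppose ν₁, …, ν_{T+1} ∈ K satisfy, for every 1 ≤ t ≤ T, ℓ_t(ν_{t+1}) − ℓ_t(μ*_t) ≤ (G²/λ)(1 + log(1+T))/√T, and suppose μ̂₁, …, μ̂_{T+1} ∈ K satisfy, for every 1 ≤ t ≤ T, the ADJUST contraction property ‖μ̂_{t+1} − ν_{t+1}‖ ≤ ‖(μ̂_t − η_t ∇ℓ_t(μ̂_t)) − ν_t‖. Then Σ_{t=1}^{T} ℓ_t(μ̂_t) − Σ_{t=1}^{T} ℓ_t(μ*_t) ≤ G·Σ_{t=1}^{T}‖ν_{t+1} − ν_t‖ − λ·Σ_{t=1}^{T}‖ν_{t+1}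 − ν_t‖² + (3/2)·G·D·√T + (G²/λ)(1 + log(1+T))·√T. -/

import Mathlib

open RealInnerProductSpace Finset

lemma aux_sum_inv_sqrt (T : ℕ) : ∑ t ∈ Icc 1 T, 1 / Real.sqrt t ≤ 2 * Real.sqrt T := by
  induction T with
  | zero => simp
  | succ n ih =>
    rw [Finset.sum_Icc_succ_top (by omega)]
    have hs : (0:ℝ) < Real.sqrt (n+1) := Real.sqrt_pos.2 (by positivity)
    have h1 : Real.sqrt n ≤ Real.sqrt (n+1) := Real.sqrt_le_sqrt (by linarith)
    have h2 : (Real.sqrt n)^2 = n := Real.sq_sqrt (by positivity)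
    have h3 : (Real.sqrt ((n:ℝ)+1))^2 = (n:ℝ)+1 := Real.sq_sqrt (by positivity)
    have key : 1 / Real.sqrt ((n:ℝ)+1) ≤ 2 * Real.sqrt ((n:ℝ)+1) - 2 * Real.sqrt n := by
      rw [div_le_iff₀ hs]
      nlinarith [sq_nonneg (Real.sqrt ((n:ℝ)+1) - Real.sqrt n)]
    push_cast
    linarith

lemma aux_telescope (a c : ℕ → ℝ) (B : ℝ)
    (ha0 : ∀ t, 0 ≤ a t) (hc0 : ∀ t, 0 ≤ c t) (hcm : ∀ t, c t ≤ c (t+1)) :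
    ∀ T, 1 ≤ T → (∀ t ∈ Icc 1 (T+1), a t ≤ B) →
    ∑ t ∈ Icc 1 T, (a t - a (t+1)) * c t ≤ B * c T - a (T+1) * c T := by
  intro T hT
  induction T, hT using Nat.le_induction with
  | base =>
    intro hB
    rw [Finset.Icc_self, Finset.sum_singleton]
    have h1 : a 1 ≤ B := hB 1 (by simp)
    nlinarith [hc0 1]
  | succ n hn ih =>
    intro hB
    rw [Finset.sum_Icc_succ_top (by omega)]
    have ihh := ih (fun t ht => hB t (by
      simp only [Finset.mem_Icc] at ht ⊢; omega))
    have h1 : a (n+1) ≤ B := hB (n+1) (by simp)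
    nlinarith [mul_le_mul_of_nonneg_right h1 (sub_nonneg.2 (hcm n))]

lemma aux_ogd_step {E : Type*} [NormedAddCommGroup E] [InnerProductSpace ℝ E]
    (u v w : E) (η G : ℝ) (hη : 0 < η) (hGb : ‖w‖ ≤ G)
    (hadj : ‖v‖ ≤ ‖u - η • w‖) :
    ⟪w, u⟫ ≤ (‖u‖^2 - ‖v‖^2) / (2*η) + η * G^2 / 2 := by
  have h2 : ‖v‖^2 ≤ ‖u - η • w‖^2 := pow_le_pow_left₀ (norm_nonneg _) hadj 2
  rw [norm_sub_sq_real, real_inner_smul_right] at h2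
  have hsm : ‖η • w‖^2 = η^2 * ‖w‖^2 := by
    rw [norm_smul, Real.norm_eq_abs, mul_pow, sq_abs]
  have hw2 : ‖w‖^2 ≤ G^2 := pow_le_pow_left₀ (norm_nonneg _) hGb 2
  have hkey : 2 * η * ⟪u, w⟫ ≤ ‖u‖^2 - ‖v‖^2 + η^2 * G^2 := by
    nlinarith [sq_nonneg η]
  rw [real_inner_comm]
  have e : (‖u‖^2 - ‖v‖^2) / (2*η) + η * G^2 / 2
      = (‖u‖^2 - ‖v‖^2 + η^2 * G^2) / (2*η) := by
    field_simp
  rw [e, le_div_iff₀ (by positivity)]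
  linarith


/-- Theorem 1 (dynamic regret of Dynamic OGD against the true minimisers): with step sizes
`η_t = D/(G√t)`, advice `ν` satisfying the CONSTRUCT guarantee
`ℓ_t(ν_{t+1}) − ℓ_t(μ*_t) ≤ (G²/λ)(1 + log(1+T))/√T` and predictors satisfying the ADJUST
contraction, the dynamic regret against the minimisers `μ*_t` is bounded by
`G·P_T(ν) − λ·S_T(ν) + (3/2)GD√T + (G²/λ)(1 + log(1+T))√T`. -/
theorem dogd_dynamic_regret {E : Type*} [NormedAddCommGroup E] [InnerProductSpace ℝ E]
    [CompleteSpace E]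
    (K : Set E) (hK : Convex ℝ K) (D : ℝ) (hD : 0 < D)
    (hdiam : ∀ x ∈ K, ∀ y ∈ K, ‖x - y‖ ≤ D)
    (T : ℕ) (hT : 1 ≤ T) (lam G : ℝ) (hlam : 0 < lam) (hG : 0 < G)
    (ℓ : ℕ → E → ℝ) (g : ℕ → E → E)
    (hdiff : ∀ t, ∀ x : E, HasGradientAt (ℓ t) (g t x) x)
    (hsc : ∀ t ∈ Icc 1 T, ∀ μ ∈ K, ∀ μ₀ ∈ K,
      ℓ t μ - ℓ t μ₀ ≤ ⟪g t μ, μ - μ₀⟫ - lam * ‖μ - μ₀‖ ^ 2)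
    (hGb : ∀ t ∈ Icc 1 T, ∀ x ∈ K, ‖g t x‖ ≤ G)
    (μstar : ℕ → E) (hμstarK : ∀ t ∈ Icc 1 T, μstar t ∈ K)
    (hmin : ∀ t ∈ Icc 1 T, ∀ y ∈ K, ℓ t (μstar t) ≤ ℓ t y)
    (ν : ℕ → E) (hνK : ∀ t ∈ Icc 1 (T + 1), ν t ∈ K)
    (hνgood : ∀ t ∈ Icc 1 T,
      ℓ t (ν (t + 1)) - ℓ t (μstar t) ≤ G ^ 2 / lam * (1 + Real.log (1 + T)) / Real.sqrt T)
    (p : ℕ → E) (hpK : ∀ t ∈ Icc 1 (T + 1), p t ∈ K)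
    (hadj : ∀ t ∈ Icc 1 T,
      ‖p (t + 1) - ν (t + 1)‖ ≤ ‖(p t - (D / (G * Real.sqrt t)) • g t (p t)) - ν t‖) :
    ∑ t ∈ Icc 1 T, ℓ t (p t) - ∑ t ∈ Icc 1 T, ℓ t (μstar t) ≤
      G * ∑ t ∈ Icc 1 T, ‖ν (t + 1) - ν t‖ - lam * ∑ t ∈ Icc 1 T, ‖ν (t + 1) - ν t‖ ^ 2
        + 3 / 2 * G * D * Real.sqrt T
        + G ^ 2 / lam * (1 + Real.log (1 + T)) * Real.sqrt T := by
  have hsT : (0:ℝ) < Real.sqrt T := Real.sqrt_pos.2 (by exact_mod_cast Nat.pos_of_ne_zero (by omega))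
  set C : ℝ := G ^ 2 / lam * (1 + Real.log (1 + T)) with hC
  set a : ℕ → ℝ := fun t => ‖p t - ν t‖ ^ 2 with ha
  set c : ℕ → ℝ := fun t => G * Real.sqrt t / D with hc
  -- membership helpers
  have hmem : ∀ t ∈ Icc 1 T, t ∈ Icc 1 (T+1) ∧ t + 1 ∈ Icc 1 (T+1) := by
    intro t ht
    simp only [Finset.mem_Icc] at ht ⊢
    omega
  -- step bound on the inner product
  have key2 : ∀ t ∈ Icc 1 T, ⟪g t (p t), p t - ν t⟫ ≤
      (a t - a (t+1)) * c t / 2 + D * G / 2 * (1 / Real.sqrt t) := by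
    intro t ht
    have ht1 : 1 ≤ t := (Finset.mem_Icc.1 ht).1
    have hst : (0:ℝ) < Real.sqrt t := Real.sqrt_pos.2 (by exact_mod_cast ht1)
    have hη : (0:ℝ) < D / (G * Real.sqrt t) := by positivity
    have hadj' : ‖p (t+1) - ν (t+1)‖ ≤
        ‖(p t - ν t) - (D / (G * Real.sqrt t)) • g t (p t)‖ := by
      have := hadj t ht
      have e : (p t - (D / (G * Real.sqrt t)) • g t (p t)) - ν t
          = (p t - ν t) - (D / (G * Real.sqrt t)) • g t (p t) := by abel
      rwa [e] at this
    have := aux_ogd_step (p t - ν t) (p (t+1) - ν (t+1)) (g t (p t))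
      (D / (G * Real.sqrt t)) G hη (hGb t ht (p t) (hpK t (hmem t ht).1)) hadj'
    calc ⟪g t (p t), p t - ν t⟫
        ≤ (a t - a (t+1)) / (2 * (D / (G * Real.sqrt t)))
            + (D / (G * Real.sqrt t)) * G ^ 2 / 2 := this
      _ = (a t - a (t+1)) * c t / 2 + D * G / 2 * (1 / Real.sqrt t) := by
          simp only [hc]
          field_simp
  have haB : ∀ t ∈ Icc 1 (T+1), a t ≤ D ^ 2 := by
    intro t ht
    exact pow_le_pow_left₀ (norm_nonneg _) (hdiam (p t) (hpK t ht) (ν t) (hνK t ht)) 2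
  have ha0 : ∀ t, 0 ≤ a t := fun t => sq_nonneg _
  have hc0 : ∀ t, 0 ≤ c t := by
    intro t
    have : (0:ℝ) ≤ Real.sqrt t := Real.sqrt_nonneg _
    positivity
  have hcm : ∀ t, c t ≤ c (t+1) := by
    intro t
    have : Real.sqrt t ≤ Real.sqrt (t+1) := Real.sqrt_le_sqrt (by push_cast; linarith)
    simp only [hc]
    push_cast
    gcongr
  have htel := aux_telescope a c (D^2) ha0 hc0 hcm T hT haB
  -- sum of inner products
  have sum_inner : ∑ t ∈ Icc 1 T, ⟪g t (p t), p t - ν t⟫ ≤ 3 / 2 * G * D * Real.sqrt T := by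
    calc ∑ t ∈ Icc 1 T, ⟪g t (p t), p t - ν t⟫
        ≤ ∑ t ∈ Icc 1 T, ((a t - a (t+1)) * c t / 2 + D * G / 2 * (1 / Real.sqrt t)) :=
          Finset.sum_le_sum key2
      _ = (∑ t ∈ Icc 1 T, (a t - a (t+1)) * c t) / 2
            + D * G / 2 * ∑ t ∈ Icc 1 T, 1 / Real.sqrt t := by
          rw [Finset.sum_add_distrib, Finset.sum_div, Finset.mul_sum]
      _ ≤ (D^2 * c T - a (T+1) * c T) / 2 + D * G / 2 * (2 * Real.sqrt T) := by
          have h1 := aux_sum_inv_sqrt T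
          have h2 : (0:ℝ) ≤ D * G / 2 := by positivity
          gcongr
      _ ≤ D^2 * c T / 2 + D * G * Real.sqrt T := by
          have := mul_nonneg (ha0 (T+1)) (hc0 T)
          nlinarith
      _ = 3 / 2 * G * D * Real.sqrt T := by
          simp only [hc]
          field_simp
          ring
  -- per-round decomposition
  have key : ∀ t ∈ Icc 1 T, ℓ t (p t) - ℓ t (μstar t) ≤
      ⟪g t (p t), p t - ν t⟫
        + (G * ‖ν (t+1) - ν t‖ - lam * ‖ν (t+1) - ν t‖ ^ 2) + C / Real.sqrt T := by
    intro t ht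
    have hm := hmem t ht
    have hA := hsc t ht (p t) (hpK t hm.1) (ν t) (hνK t hm.1)
    have hB := hsc t ht (ν t) (hνK t hm.1) (ν (t+1)) (hνK (t+1) hm.2)
    have hCs := hνgood t ht
    have hBi : ⟪g t (ν t), ν t - ν (t+1)⟫ ≤ G * ‖ν (t+1) - ν t‖ := by
      calc ⟪g t (ν t), ν t - ν (t+1)⟫ ≤ ‖g t (ν t)‖ * ‖ν t - ν (t+1)‖ :=
            real_inner_le_norm _ _
        _ ≤ G * ‖ν (t+1) - ν t‖ := by
            rw [norm_sub_rev (ν t)]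
            exact mul_le_mul_of_nonneg_right (hGb t ht (ν t) (hνK t hm.1)) (norm_nonneg _)
    have hnrev : ‖ν t - ν (t+1)‖ ^ 2 = ‖ν (t+1) - ν t‖ ^ 2 := by rw [norm_sub_rev]
    have hsq : 0 ≤ lam * ‖p t - ν t‖ ^ 2 := by positivity
    rw [hnrev] at hB
    linarith
  -- combine
  rw [← Finset.sum_sub_distrib]
  have hTs : (T:ℝ) * (C / Real.sqrt T) = C * Real.sqrt T := by
    have h : Real.sqrt T * Real.sqrt T = (T:ℝ) := Real.mul_self_sqrt (by positivity)
    rw [mul_div_assoc', div_eq_iff hsT.ne']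
    linear_combination (-C) * h
  calc ∑ t ∈ Icc 1 T, (ℓ t (p t) - ℓ t (μstar t))
      ≤ ∑ t ∈ Icc 1 T, (⟪g t (p t), p t - ν t⟫
          + (G * ‖ν (t+1) - ν t‖ - lam * ‖ν (t+1) - ν t‖ ^ 2) + C / Real.sqrt T) :=
        Finset.sum_le_sum key
    _ = ∑ t ∈ Icc 1 T, ⟪g t (p t), p t - ν t⟫
          + (G * ∑ t ∈ Icc 1 T, ‖ν (t+1) - ν t‖
            - lam * ∑ t ∈ Icc 1 T, ‖ν (t+1) - ν t‖ ^ 2)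
          + (T:ℝ) * (C / Real.sqrt T) := by
        rw [Finset.sum_add_distrib, Finset.sum_add_distrib, Finset.sum_sub_distrib,
          Finset.mul_sum, Finset.mul_sum, Finset.sum_const, Nat.card_Icc]
        simp [nsmul_eq_mul]
    _ ≤ 3 / 2 * G * D * Real.sqrt T
          + (G * ∑ t ∈ Icc 1 T, ‖ν (t+1) - ν t‖
            - lam * ∑ t ∈ Icc 1 T, ‖ν (t+1) - ν t‖ ^ 2)
          + C * Real.sqrt T := by
        rw [hTs]
        linarith [sum_inner]
    _ = G * ∑ t ∈ Icc 1 T, ‖ν (t + 1) - ν t‖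
          - lam * ∑ t ∈ Icc 1 T, ‖ν (t + 1) - ν t‖ ^ 2
          + 3 / 2 * G * D * Real.sqrt T
          + C * Real.sqrt T := by ring
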